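/- Let H be a Hilbert space and S a bounded subset of H. Then there exists a unique point v* in H such that S is contained in the closed ball centered at v* with radius equal to the Chebyshev radius rad(S) := inf { r : S ⊆ B(v,r) for some v ∈ H }. -/

import Mathlib

/-- The Chebyshev radius of a set: the infimum of radii of closed balls containing it. -/
noncomputable def chebRadius {H : Type*} [NormedAddCommGroup H] (S : Set H) : ℝ :=
  sInf {r : ℝ | ∃ v : H, S ⊆ Metric.closedBall v r}

/-- Parallelogram identity in midpoint form. -/
lemma cheb_parallelogram {H : Type*} [NormedAddCommGroup H] [InnerProductSpace ℝ H]
    (s u v : H) :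
    ‖s - u‖^2 + ‖s - v‖^2 = 2*‖s - (2:ℝ)⁻¹ • (u+v)‖^2 + ‖u - v‖^2/2 := by
  have h := parallelogram_law_with_norm ℝ (s - (2:ℝ)⁻¹ • (u+v)) ((2:ℝ)⁻¹ • (u-v))
  have h1 : s - (2:ℝ)⁻¹ • (u+v) + (2:ℝ)⁻¹ • (u-v) = s - v := by module
  have h2 : s - (2:ℝ)⁻¹ • (u+v) - (2:ℝ)⁻¹ • (u-v) = s - u := by module
  rw [h1, h2] at h
  have h3 : ‖(2:ℝ)⁻¹ • (u-v)‖ = ‖u-v‖/2 := by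
    rw [norm_smul]; simp [Real.norm_eq_abs]; ring
  rw [h3] at h
  nlinarith [h]

/-- If `S` is a bounded (nonempty) subset of a Hilbert space `H`, there is a unique
point `v*` such that `S` is contained in the closed ball centered at `v*`
of radius `rad(S)`. -/
theorem stmt0 {H : Type*} [NormedAddCommGroup H] [InnerProductSpace ℝ H] [CompleteSpace H]
    (S : Set H) (hbdd : Bornology.IsBounded S) (hne : S.Nonempty) :
    ∃! v : H, S ⊆ Metric.closedBall v (chebRadius S) := by
  obtain ⟨s0, hs0⟩ := hne
  set T : Set ℝ := {r : ℝ | ∃ v : H, S ⊆ Metric.closedBall v r} with hT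
  have hTne : T.Nonempty := by
    obtain ⟨r, hr⟩ := hbdd.subset_closedBall s0
    exact ⟨max r 0, s0, hr.trans (Metric.closedBall_subset_closedBall (le_max_left _ _))⟩
  have hTbdd : BddBelow T := by
    refine ⟨0, fun r hr => ?_⟩
    obtain ⟨v, hv⟩ := hr
    exact le_trans dist_nonneg (hv hs0)
  set R := sInf T with hRdef
  have hcheb : chebRadius S = R := rfl
  have hR0 : 0 ≤ R := le_csInf hTne (fun r hr => by
    obtain ⟨v, hv⟩ := hr; exact le_trans dist_nonneg (hv hs0))
  -- key lemma
  have klemma : ∀ (u v : H) (a b : ℝ), S ⊆ Metric.closedBall u a → S ⊆ Metric.closedBall v b →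
      ‖u - v‖^2 ≤ 2*(a^2 + b^2) - 4*R^2 := by
    intro u v a b hu hv
    have hmem : ∀ s ∈ S,
        ‖s - (2:ℝ)⁻¹ • (u+v)‖^2 ≤ (a^2 + b^2)/2 - ‖u - v‖^2/4 := by
      intro s hs
      have h1 := cheb_parallelogram s u v
      have h2 : ‖s - u‖ ≤ a := by
        have := hu hs; rwa [Metric.mem_closedBall, dist_eq_norm] at this
      have h3 : ‖s - v‖ ≤ b := by
        have := hv hs; rwa [Metric.mem_closedBall, dist_eq_norm] at this
      nlinarith [norm_nonneg (s - u), norm_nonneg (s - v)]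
    have hD0 : 0 ≤ (a^2 + b^2)/2 - ‖u - v‖^2/4 :=
      le_trans (sq_nonneg ‖s0 - (2:ℝ)⁻¹ • (u+v)‖) (hmem s0 hs0)
    have hsub : S ⊆ Metric.closedBall ((2:ℝ)⁻¹ • (u+v))
        (Real.sqrt ((a^2 + b^2)/2 - ‖u - v‖^2/4)) := by
      intro s hs
      rw [Metric.mem_closedBall, dist_eq_norm, Real.le_sqrt (norm_nonneg _) hD0]
      exact hmem s hs
    have hle : R ≤ Real.sqrt ((a^2 + b^2)/2 - ‖u - v‖^2/4) := csInf_le hTbdd ⟨_, hsub⟩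
    have hsq : R^2 ≤ (a^2 + b^2)/2 - ‖u - v‖^2/4 := by
      nlinarith [Real.sq_sqrt hD0, Real.sqrt_nonneg ((a^2 + b^2)/2 - ‖u - v‖^2/4)]
    linarith
  -- approximating sequence
  have hseq : ∀ n : ℕ, ∃ v : H, S ⊆ Metric.closedBall v (R + 1/((n:ℝ)+1)) := by
    intro n
    have hpos : (0:ℝ) < 1/((n:ℝ)+1) := by positivity
    obtain ⟨r, hrT, hr⟩ := exists_lt_of_csInf_lt hTne (lt_add_of_pos_right R hpos)
    obtain ⟨v, hv⟩ := hrT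
    exact ⟨v, hv.trans (Metric.closedBall_subset_closedBall hr.le)⟩
  choose w hw using hseq
  -- Cauchy
  have hbound : ∀ n m N : ℕ, N ≤ n → N ≤ m →
      dist (w n) (w m) ≤ Real.sqrt (8*R*(1/((N:ℝ)+1)) + 4*(1/((N:ℝ)+1))^2) := by
    intro n m N hn hm
    have h1 : (1:ℝ)/((n:ℝ)+1) ≤ 1/((N:ℝ)+1) := by
      apply one_div_le_one_div_of_le (by positivity)
      exact by exact_mod_cast add_le_add_left (Nat.cast_le.mpr hn) 1
    have h2 : (1:ℝ)/((m:ℝ)+1) ≤ 1/((N:ℝ)+1) := by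
      apply one_div_le_one_div_of_le (by positivity)
      exact by exact_mod_cast add_le_add_left (Nat.cast_le.mpr hm) 1
    have hk := klemma (w n) (w m) _ _ (hw n) (hw m)
    have hN0 : (0:ℝ) ≤ 1/((N:ℝ)+1) := by positivity
    have hn0 : (0:ℝ) ≤ 1/((n:ℝ)+1) := by positivity
    have hm0 : (0:ℝ) ≤ 1/((m:ℝ)+1) := by positivity
    rw [dist_eq_norm, Real.le_sqrt (norm_nonneg _) (by positivity)]
    nlinarith [hk, mul_le_mul_of_nonneg_left h1 hR0, mul_le_mul_of_nonneg_left h2 hR0,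
      mul_self_le_mul_self hn0 h1, mul_self_le_mul_self hm0 h2]
  have hb0 : Filter.Tendsto (fun N : ℕ => Real.sqrt (8*R*(1/((N:ℝ)+1)) + 4*(1/((N:ℝ)+1))^2))
      Filter.atTop (nhds 0) := by
    have ht : Filter.Tendsto (fun N : ℕ => 1/((N:ℝ)+1)) Filter.atTop (nhds 0) :=
      tendsto_one_div_add_atTop_nhds_zero_nat
    have h0 : Filter.Tendsto (fun N : ℕ => 8*R*(1/((N:ℝ)+1)) + 4*(1/((N:ℝ)+1))^2)
        Filter.atTop (nhds 0) := by
      have := (ht.const_mul (8*R)).add ((ht.pow 2).const_mul 4)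
      simpa [mul_comm] using this
    have hc : Filter.Tendsto Real.sqrt (nhds 0) (nhds 0) := by
      simpa using Real.continuous_sqrt.tendsto 0
    exact hc.comp h0
  have hcauchy : CauchySeq w := cauchySeq_of_le_tendsto_0 _ hbound hb0
  obtain ⟨v, hv⟩ := cauchySeq_tendsto_of_complete hcauchy
  have hvball : S ⊆ Metric.closedBall v R := by
    intro s hs
    rw [Metric.mem_closedBall]
    have h1 : Filter.Tendsto (fun n => dist s (w n)) Filter.atTop (nhds (dist s v)) :=
      Filter.Tendsto.dist tendsto_const_nhds hv
    have h2 : Filter.Tendsto (fun n : ℕ => R + 1/((n:ℝ)+1)) Filter.atTop (nhds R) := by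
      simpa using (tendsto_const_nhds (x := R)).add tendsto_one_div_add_atTop_nhds_zero_nat
    exact le_of_tendsto_of_tendsto' h1 h2 (fun n => (hw n hs))
  refine ⟨v, by rwa [hcheb], ?_⟩
  intro u hu
  rw [hcheb] at hu
  have h1 := klemma u v R R hu hvball
  have h2 : ‖u - v‖ = 0 := by nlinarith [norm_nonneg (u - v)]
  exact sub_eq_zero.mp (norm_eq_zero.mp h2)
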